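/- For 0 < α < 1/p, define f_α(z) = z|z|^{−2α} for |z| ≤ 1 and f_α(z) = 1/conj(z) for |z| ≥ 1. Then the ratio ∫_ℂ |∂f_α|^p dA / ∫_ℂ |∂̄f_α|^p dA tends to (p−1)^p as α → 1/p. -/

import Mathlib

open MeasureTheory Set

lemma radial_aux (f : ℝ → ℝ) :
    ∫ z : ℂ, f ‖z‖ = (2 * Real.pi) * ∫ y in Ioi (0:ℝ), y * f y := by
  have h := MeasureTheory.integral_fun_norm_addHaar (volume : Measure ℂ) f
  simp only [Complex.finrank_real_complex, Measure.real, Complex.volume_ball,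
    ENNReal.ofReal_one, one_pow, one_mul, ENNReal.coe_toReal, NNReal.coe_real_pi,
    Nat.reduceSub, pow_one, smul_eq_mul, nsmul_eq_mul, Nat.cast_ofNat] at h
  rw [h]; ring

lemma head_int {p α : ℝ} (c : ℝ) (hp : 1 < p) (hc : 0 ≤ c) (hαp : α * p < 1) :
    ∫ y in Ioi (0:ℝ), y * (if y < 1 then c * y ^ (-2*α) else 0) ^ p
      = c ^ p / (2 - 2*α*p) := by
  have hr : (-1:ℝ) < 1 - 2*α*p := by nlinarith
  have hp0 : p ≠ 0 := by positivity
  have heq : EqOn (fun y : ℝ => y * (if y < 1 then c * y ^ (-2*α) else 0) ^ p)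
      (fun y : ℝ => c ^ p * y ^ (1 - 2*α*p)) (Ioo 0 1) := by
    intro y hy
    simp only [if_pos hy.2]
    rw [Real.mul_rpow hc (Real.rpow_nonneg hy.1.le _), ← Real.rpow_mul hy.1.le,
      show (1 - 2*α*p) = 1 + (-2*α*p) by ring, Real.rpow_add hy.1, Real.rpow_one]
    ring
  have heq0 : EqOn (fun y : ℝ => y * (if y < 1 then c * y ^ (-2*α) else 0) ^ p)
      (fun _ => (0:ℝ)) (Ici 1) := by
    intro y hy
    simp [not_lt.2 (mem_Ici.1 hy), Real.zero_rpow hp0]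
  have hint : IntegrableOn (fun y : ℝ => c ^ p * y ^ (1 - 2*α*p)) (Ioo 0 1) :=
    (((intervalIntegral.intervalIntegrable_rpow' hr (a := 0) (b := 1)).1.mono_set
      Ioo_subset_Ioc_self).const_mul _)
  rw [show Ioi (0:ℝ) = Ioo 0 1 ∪ Ici 1 from (Ioo_union_Ici_eq_Ioi zero_lt_one).symm,
    setIntegral_union ((Iio_disjoint_Ici le_rfl).mono_left Ioo_subset_Iio_self) measurableSet_Ici
      (hint.congr_fun heq.symm measurableSet_Ioo)
      ((integrableOn_zero).congr_fun heq0.symm measurableSet_Ici),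
    setIntegral_congr_fun measurableSet_Ici heq0, integral_zero, add_zero,
    setIntegral_congr_fun measurableSet_Ioo heq, integral_const_mul,
    ← integral_Ioc_eq_integral_Ioo, ← intervalIntegral.integral_of_le zero_le_one,
    integral_rpow (Or.inl hr), Real.one_rpow, Real.zero_rpow (by linarith : 1 - 2*α*p + 1 ≠ 0)]
  rw [show (1 - 2*α*p + 1) = 2 - 2*α*p by ring]
  ring

lemma tail_int {p : ℝ} (hp : 1 < p) :
    ∫ y in Ici (1:ℝ), y * (y ^ (-2:ℝ)) ^ p = 1 / (2*p - 2) := by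
  have hr : 1 - 2*p < -1 := by linarith
  have heq : EqOn (fun y : ℝ => y * (y ^ (-2:ℝ)) ^ p) (fun y : ℝ => y ^ (1 - 2*p)) (Ioi 1) := by
    intro y hy
    have hy0 : (0:ℝ) < y := lt_trans zero_lt_one hy
    simp only
    rw [← Real.rpow_mul hy0.le, show (1 - 2*p) = 1 + (-2*p) by ring,
      Real.rpow_add hy0, Real.rpow_one]
  rw [integral_Ici_eq_integral_Ioi, setIntegral_congr_fun measurableSet_Ioi heq,
    integral_Ioi_rpow_of_lt hr zero_lt_one, Real.one_rpow,
    show (1 - 2*p + 1) = -(2*p - 2) by ring, div_neg]; ring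

lemma denom_int {p α : ℝ} (hp : 1 < p) (hα : 0 ≤ α) (hαp : α * p < 1) :
    ∫ y in Ioi (0:ℝ), y * (if y < 1 then α * y ^ (-2*α) else y ^ (-2:ℝ)) ^ p
      = α ^ p / (2 - 2*α*p) + 1 / (2*p - 2) := by
  have hr : (-1:ℝ) < 1 - 2*α*p := by nlinarith
  have heq : EqOn (fun y : ℝ => y * (if y < 1 then α * y ^ (-2*α) else y ^ (-2:ℝ)) ^ p)
      (fun y : ℝ => α ^ p * y ^ (1 - 2*α*p)) (Ioo 0 1) := by
    intro y hy
    simp only [if_pos hy.2]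
    rw [Real.mul_rpow hα (Real.rpow_nonneg hy.1.le _), ← Real.rpow_mul hy.1.le,
      show (1 - 2*α*p) = 1 + (-2*α*p) by ring, Real.rpow_add hy.1, Real.rpow_one]
    ring
  have heqT : EqOn (fun y : ℝ => y * (if y < 1 then α * y ^ (-2*α) else y ^ (-2:ℝ)) ^ p)
      (fun y : ℝ => y * (y ^ (-2:ℝ)) ^ p) (Ici 1) := by
    intro y hy
    simp only [if_neg (not_lt.2 (mem_Ici.1 hy))]
  have hint : IntegrableOn (fun y : ℝ => α ^ p * y ^ (1 - 2*α*p)) (Ioo 0 1) :=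
    (((intervalIntegral.intervalIntegrable_rpow' hr (a := 0) (b := 1)).1.mono_set
      Ioo_subset_Ioc_self).const_mul _)
  have hintT : IntegrableOn (fun y : ℝ => y * (y ^ (-2:ℝ)) ^ p) (Ici 1) := by
    rw [integrableOn_Ici_iff_integrableOn_Ioi]
    refine (integrableOn_Ioi_rpow_of_lt (by linarith : 1 - 2*p < -1) zero_lt_one).congr_fun
      ?_ measurableSet_Ioi
    intro y hy
    have hy0 : (0:ℝ) < y := lt_trans zero_lt_one hy
    have : y * (y ^ (-2:ℝ)) ^ p = y ^ (1 - 2*p) := by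
      rw [← Real.rpow_mul hy0.le, show (1 - 2*p) = 1 + (-2*p) by ring,
        Real.rpow_add hy0, Real.rpow_one]
    exact this.symm
  rw [show Ioi (0:ℝ) = Ioo 0 1 ∪ Ici 1 from (Ioo_union_Ici_eq_Ioi zero_lt_one).symm,
    setIntegral_union ((Iio_disjoint_Ici le_rfl).mono_left Ioo_subset_Iio_self) measurableSet_Ici
      (hint.congr_fun heq.symm measurableSet_Ioo)
      (hintT.congr_fun heqT.symm measurableSet_Ici),
    setIntegral_congr_fun measurableSet_Ici heqT, tail_int hp,
    setIntegral_congr_fun measurableSet_Ioo heq, integral_const_mul,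
    ← integral_Ioc_eq_integral_Ioo, ← intervalIntegral.integral_of_le zero_le_one,
    integral_rpow (Or.inl hr), Real.one_rpow, Real.zero_rpow (by linarith : 1 - 2*α*p + 1 ≠ 0)]
  rw [show (1 - 2*α*p + 1) = 2 - 2*α*p by ring]
  ring

/-- The ratio ∫|∂f_α|^p / ∫|∂̄f_α|^p tends to (p−1)^p as α → 1/p. -/
theorem stmt12 (p : ℝ) (hp : 1 < p) :
    Filter.Tendsto (fun α : ℝ =>
      (∫ z : ℂ, (if ‖z‖ < 1 then (1 - α) * ‖z‖ ^ (-2 * α) else 0) ^ p) /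
      (∫ z : ℂ, (if ‖z‖ < 1 then α * ‖z‖ ^ (-2 * α)
        else ‖z‖ ^ (-2 : ℝ)) ^ p))
      (nhdsWithin (1 / p) (Set.Ioo 0 (1 / p))) (nhds ((p - 1) ^ p)) := by
  have hp0 : (0:ℝ) < p := lt_trans zero_lt_one hp
  set G : ℝ → ℝ := fun α => (1 - α) ^ p / (α ^ p + (2 - 2*α*p) / (2*p - 2)) with hG
  have key : ∀ α ∈ Ioo (0:ℝ) (1/p),
      (∫ z : ℂ, (if ‖z‖ < 1 then (1 - α) * ‖z‖ ^ (-2 * α) else 0) ^ p) /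
      (∫ z : ℂ, (if ‖z‖ < 1 then α * ‖z‖ ^ (-2 * α)
        else ‖z‖ ^ (-2 : ℝ)) ^ p) = G α := by
    intro α hα
    have hαp : α * p < 1 := by
      have := hα.2
      rw [lt_div_iff₀ hp0] at this
      linarith
    have hα1 : 0 ≤ 1 - α := by nlinarith [hα.1]
    have hN : (∫ z : ℂ, (if ‖z‖ < 1 then (1 - α) * ‖z‖ ^ (-2 * α) else 0) ^ p)
        = (2 * Real.pi) * ((1 - α) ^ p / (2 - 2*α*p)) := by
      have h := radial_aux (fun y : ℝ => (if y < 1 then (1 - α) * y ^ (-2*α) else 0) ^ p)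
      beta_reduce at h
      rw [h, head_int _ hp hα1 hαp]
    have hD : (∫ z : ℂ, (if ‖z‖ < 1 then α * ‖z‖ ^ (-2 * α)
          else ‖z‖ ^ (-2 : ℝ)) ^ p)
        = (2 * Real.pi) * (α ^ p / (2 - 2*α*p) + 1 / (2*p - 2)) := by
      have h := radial_aux (fun y : ℝ => (if y < 1 then α * y ^ (-2*α) else y ^ (-2:ℝ)) ^ p)
      beta_reduce at h
      rw [h, denom_int hp hα.1.le hαp]
    rw [hN, hD, hG]
    have h1 : (0:ℝ) < 2 - 2*α*p := by linarith
    have h2 : (0:ℝ) < 2*p - 2 := by linarith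
    have h3 : (0:ℝ) < α ^ p := Real.rpow_pos_of_pos hα.1 p
    have hpi : (0:ℝ) < Real.pi := Real.pi_pos
    beta_reduce
    generalize 2 - 2 * α * p = B at *
    generalize 2 * p - 2 = D at *
    field_simp
  refine Filter.Tendsto.congr' (Filter.eventuallyEq_of_mem self_mem_nhdsWithin
    fun α hα => (key α hα).symm) ?_
  have hlim : Filter.Tendsto G (nhds (1/p)) (nhds ((p - 1) ^ p)) := by
    have hnum : Filter.Tendsto (fun α : ℝ => (1 - α) ^ p) (nhds (1/p))
        (nhds ((1 - 1/p) ^ p)) :=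
      ((continuous_const.sub continuous_id).tendsto _).rpow_const (Or.inr hp0.le)
    have hden : Filter.Tendsto (fun α : ℝ => α ^ p + (2 - 2*α*p) / (2*p - 2)) (nhds (1/p))
        (nhds ((1/p) ^ p + (2 - 2*(1/p)*p) / (2*p - 2))) := by
      exact ((continuous_id.tendsto _).rpow_const (Or.inr hp0.le)).add
        (((continuous_const.sub ((continuous_const.mul continuous_id).mul
          continuous_const)).tendsto _).div_const _)
    have hz : 2 - 2*(1/p)*p = 0 := by field_simp; ring
    rw [hz, zero_div, add_zero] at hden
    have hne : (1/p : ℝ) ^ p ≠ 0 := (Real.rpow_pos_of_pos (by positivity) p).ne'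
    have := hnum.div hden hne
    convert this using 2
    · rfl
    rw [← Real.div_rpow (by nlinarith : (0:ℝ) ≤ 1 - 1/p) (by positivity : (0:ℝ) ≤ 1/p)]
    congr 1
    field_simp
  exact hlim.mono_left nhdsWithin_le_nhds
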